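/- Let (S_t)_{t≥0} be simple symmetric random walk on ℤ started at 0 and τ_n its hitting time of level n ≥ 1. For all n and all t > 0, P(τ_n ≤ t) ≤ inf_{z∈(0,1)} ((1−√(1−z²))/z)^n · z^{−t}. In particular, choosing z² = 1 − 1/α² with α = 2√(t/(log N)), if n ≥ 10γ√(τ*)·log N and t = 9γ·τ*·log N for some τ* ≥ 1 and γ > 0, then P(τ_n ≤ t) ≤ N^{−5γ/4} for N large enough. -/

import Mathlib

open MeasureTheory ProbabilityTheory
open scoped ENNReal NNReal

namespace Stmt7

def val (b : Bool) : ℤ := cond b 1 (-1)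

lemma val_true : val true = 1 := rfl
lemma val_false : val false = -1 := rfl

noncomputable def w (z φ : ℝ) (m : ℤ) : ℤ → List Bool → ℝ
  | x, [] => if x = m then 1 else φ ^ (m - x)
  | x, b :: l => if x = m then 1 else z * w z φ m (x + val b) l

def hits (m : ℤ) : ℤ → List Bool → Bool
  | x, [] => x == m
  | x, b :: l => x == m || hits m (x + val b) l

def sv (lo hi : ℤ) : ℤ → List Bool → ℤ
  | x, [] => x
  | x, b :: l => if x = lo ∨ x = hi then x else sv lo hi (x + val b) l

def psum : List Bool → ℕ → ℤ
  | _, 0 => 0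
  | [], _ + 1 => 0
  | b :: l, s + 1 => val b + psum l s

lemma psum_nil (s : ℕ) : psum [] s = 0 := by cases s <;> rfl

lemma psum_succ_get : ∀ (l : List Bool) (s : ℕ) (h : s < l.length),
    psum l (s + 1) = psum l s + val l[s] := by
  intro l
  induction l with
  | nil => intro s h; simp at h
  | cons b l ih =>
    intro s h
    cases s with
    | zero => simp [psum]
    | succ s =>
      have hs : s < l.length := by simpa using h
      simp only [psum, ih s hs]
      simp
      ring

lemma sum_split {T : ℕ} {M : Type*} [AddCommMonoid M] (F : List Bool → M) :
    ∑ p : Fin (T + 1) → Bool, F (List.ofFn p)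
      = ∑ b : Bool, ∑ q : Fin T → Bool, F (b :: List.ofFn q) := by
  rw [← (Fin.consEquiv (fun _ : Fin (T + 1) => Bool)).sum_comp (fun p => F (List.ofFn p)),
    Fintype.sum_prod_type]
  refine Finset.sum_congr rfl fun b _ => Finset.sum_congr rfl fun q _ => ?_
  congr 1
  rw [List.ofFn_succ]
  simp [Fin.consEquiv]

lemma wsum (z φ : ℝ) (hφ : φ ≠ 0) (hrel : z * (φ⁻¹ + φ) = 2) (m : ℤ) :
    ∀ (T : ℕ) (x : ℤ), x ≤ m →
      ∑ p : Fin T → Bool, w z φ m x (List.ofFn p) = 2 ^ T * φ ^ (m - x) := by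
  intro T
  induction T with
  | zero =>
    intro x hx
    haveI : Subsingleton (Fin 0 → Bool) := ⟨fun a b => funext fun i => i.elim0⟩
    rw [Fintype.sum_subsingleton _ (fun _ => false)]
    simp only [List.ofFn_zero, w]
    split
    · simp_all
    · simp
  | succ T ih =>
    intro x hx
    rw [sum_split]
    rcases eq_or_lt_of_le hx with h | h
    · subst h
      simp only [w, if_pos rfl]
      simp [Finset.card_univ]
      ring
    · have hxm : x ≠ m := ne_of_lt h
      have h1 : x + val true ≤ m := by simp [val]; omega
      have h2 : x + val false ≤ m := by simp [val]; omega
      simp only [w, if_neg hxm]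
      rw [Fintype.sum_bool]
      rw [← Finset.mul_sum, ← Finset.mul_sum, ih _ h1, ih _ h2]
      have e1 : m - (x + val true) = (m - x) + (-1) := by simp [val]; ring
      have e2 : m - (x + val false) = (m - x) + 1 := by simp [val]; ring
      rw [e1, e2, zpow_add₀ hφ, zpow_add₀ hφ]
      have : z * (2 ^ T * (φ ^ (m - x) * φ ^ (-1 : ℤ))) + z * (2 ^ T * (φ ^ (m - x) * φ ^ (1 : ℤ)))
          = (2:ℝ) ^ T * φ ^ (m - x) * (z * (φ⁻¹ + φ)) := by
        simp [zpow_neg, zpow_one]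
        ring
      rw [this, hrel]
      ring

lemma w_nonneg {z φ : ℝ} (hz : 0 ≤ z) (hφ : 0 ≤ φ) (m : ℤ) :
    ∀ (l : List Bool) (x : ℤ), 0 ≤ w z φ m x l := by
  intro l
  induction l with
  | nil =>
    intro x
    simp only [w]
    split
    · norm_num
    · exact zpow_nonneg hφ _
  | cons b l ih =>
    intro x; simp only [w]; split
    · norm_num
    · exact mul_nonneg hz (ih _)

lemma w_ge_of_hits {z φ : ℝ} (hz : 0 < z) (hz1 : z ≤ 1) (m : ℤ) :
    ∀ (l : List Bool) (x : ℤ), hits m x l = true → z ^ l.length ≤ w z φ m x l := by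
  intro l
  induction l with
  | nil =>
    intro x h
    simp only [hits, beq_iff_eq] at h
    simp [w, h]
  | cons b l ih =>
    intro x h
    simp only [hits, Bool.or_eq_true, beq_iff_eq] at h
    simp only [w, List.length_cons]
    rcases eq_or_ne x m with hxm | hxm
    · rw [if_pos hxm]
      exact pow_le_one₀ hz.le hz1
    · rw [if_neg hxm]
      rcases h with h | h
      · exact absurd h hxm
      · rw [pow_succ, mul_comm]
        exact mul_le_mul_of_nonneg_left (ih _ h) hz.le

lemma svsum (lo hi : ℤ) :
    ∀ (T : ℕ) (x : ℤ), ∑ p : Fin T → Bool, sv lo hi x (List.ofFn p) = 2 ^ T * x := by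
  intro T
  induction T with
  | zero =>
    intro x
    haveI : Subsingleton (Fin 0 → Bool) := ⟨fun a b => funext fun i => i.elim0⟩
    rw [Fintype.sum_subsingleton _ (fun _ => false)]
    simp [sv]
  | succ T ih =>
    intro x
    rw [sum_split]
    by_cases hx : x = lo ∨ x = hi
    · simp only [sv, if_pos hx]
      simp [Finset.card_univ]
      ring
    · simp only [sv, if_neg hx]
      rw [Fintype.sum_bool, ih, ih]
      simp [val]
      ring

lemma sv_mem {lo hi : ℤ} :
    ∀ (l : List Bool) (x : ℤ), lo ≤ x → x ≤ hi →
      lo ≤ sv lo hi x l ∧ sv lo hi x l ≤ hi := by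
  intro l
  induction l with
  | nil => intro x h1 h2; exact ⟨h1, h2⟩
  | cons b l ih =>
    intro x h1 h2
    simp only [sv]
    split
    · exact ⟨h1, h2⟩
    · rename_i hx
      push_neg at hx
      have : lo ≤ x + val b ∧ x + val b ≤ hi := by
        cases b <;> simp [val] <;> omega
      exact ih _ this.1 this.2

lemma sv_eq_lo {lo hi : ℤ} :
    ∀ (l : List Bool) (x : ℤ), lo ≤ x → x ≤ hi →
      hits lo x l = true → ¬ hits hi x l = true → sv lo hi x l = lo := by
  intro l
  induction l with
  | nil =>
    intro x _ _ h1 _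
    simp only [hits, beq_iff_eq] at h1
    simp [sv, h1]
  | cons b l ih =>
    intro x hxlo hxhi h1 h2
    simp only [hits, Bool.or_eq_true, beq_iff_eq] at h1 h2
    push_neg at h2
    simp only [sv]
    rcases eq_or_ne x lo with hlo | hlo
    · rw [if_pos (Or.inl hlo)]; exact hlo
    · have hhi : x ≠ hi := h2.1
      rw [if_neg (by tauto)]
      have h1' : hits lo (x + val b) l = true := by tauto
      have hb : lo ≤ x + val b ∧ x + val b ≤ hi := by
        cases b <;> simp [val] <;> omega
      exact ih _ hb.1 hb.2 h1' h2.2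

lemma hits_of_le_sum (m : ℤ) :
    ∀ (l : List Bool) (x : ℤ), x ≤ m → m ≤ x + psum l l.length → hits m x l = true := by
  intro l
  induction l with
  | nil =>
    intro x h1 h2
    simp only [psum_nil, add_zero] at h2
    simp only [hits, beq_iff_eq]
    omega
  | cons b l ih =>
    intro x h1 h2
    simp only [hits, Bool.or_eq_true, beq_iff_eq]
    rcases eq_or_ne x m with hxm | hxm
    · exact Or.inl hxm
    · refine Or.inr (ih _ ?_ ?_)
      · cases b <;> simp [val] <;> omega
      · simp only [List.length_cons, psum] at h2
        omega

lemma hits_iff (m : ℤ) :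
    ∀ (l : List Bool) (x : ℤ),
      hits m x l = true ↔ ∃ s ≤ l.length, x + psum l s = m := by
  intro l
  induction l with
  | nil =>
    intro x
    simp only [hits, beq_iff_eq, List.length_nil]
    constructor
    · intro h; exact ⟨0, le_refl _, by simp [psum, h]⟩
    · rintro ⟨s, hs, h⟩
      rw [psum_nil] at h
      omega
  | cons b l ih =>
    intro x
    simp only [hits, Bool.or_eq_true, beq_iff_eq, ih, List.length_cons]
    constructor
    · rintro (h | ⟨s, hs, h⟩)
      · exact ⟨0, by omega, by simp [psum, h]⟩
      · exact ⟨s + 1, by omega, by simp only [psum]; omega⟩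
    · rintro ⟨s, hs, h⟩
      cases s with
      | zero => simp [psum] at h; exact Or.inl h
      | succ s =>
        simp only [psum] at h
        exact Or.inr ⟨s, by omega, by omega⟩


lemma psum_zero (l : List Bool) : psum l 0 = 0 := by cases l <;> rfl

lemma inside {lo hi : ℤ} (hlo : lo < 0) (hhi : 0 < hi) (l : List Bool)
    (h1 : ¬ hits hi 0 l = true) (h2 : ¬ hits lo 0 l = true) :
    ∀ s ≤ l.length, lo < psum l s ∧ psum l s < hi := by
  have key : ∀ s ≤ l.length, psum l s ≠ hi ∧ psum l s ≠ lo := by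
    intro s hs
    constructor
    · intro he; exact h1 ((hits_iff hi l 0).2 ⟨s, hs, by omega⟩)
    · intro he; exact h2 ((hits_iff lo l 0).2 ⟨s, hs, by omega⟩)
  intro s
  induction s with
  | zero => intro _; rw [psum_zero]; exact ⟨hlo, hhi⟩
  | succ s ih =>
    intro hs
    have hs' : s < l.length := by omega
    have ihs := ih (by omega)
    have hk := key (s+1) hs
    have hstep := psum_succ_get l s hs'
    have : val l[s] = 1 ∨ val l[s] = -1 := by cases l[s] <;> simp [val]
    omega

lemma block_false {lo hi : ℤ} (hlo : lo < 0) (hhi : 0 < hi) {L B : ℕ}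
    (hL : hi ≤ lo + L) (p : Fin (L * B) → Bool)
    (h1 : ¬ hits hi 0 (List.ofFn p) = true) (h2 : ¬ hits lo 0 (List.ofFn p) = true) :
    ∀ k : Fin B, ∃ j : Fin L, p ⟨k * L + j, by
      calc (k:ℕ) * L + j < (k:ℕ) * L + L := by omega
      _ = ((k:ℕ) + 1) * L := by ring
      _ ≤ B * L := Nat.mul_le_mul_right L k.2
      _ = L * B := Nat.mul_comm B L⟩ = false := by
    intro k
    by_contra hcon
    push_neg at hcon
    set l := List.ofFn p with hl
    have hlen : l.length = L * B := by simp [hl]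
    have hins := inside hlo hhi l h1 h2
    have hidx : ∀ j : ℕ, j ≤ L → (k:ℕ) * L + j ≤ L * B := by
      intro j hj
      calc (k:ℕ) * L + j ≤ (k:ℕ) * L + L := by omega
      _ = ((k:ℕ) + 1) * L := by ring
      _ ≤ B * L := Nat.mul_le_mul_right L k.2
      _ = L * B := Nat.mul_comm B L
    have grow : ∀ j : ℕ, j ≤ L → psum l ((k:ℕ) * L + j) = psum l ((k:ℕ) * L) + j := by
      intro j
      induction j with
      | zero => intro _; simp
      | succ j ih =>
        intro hj
        have hj' : (k:ℕ) * L + j < l.length := by rw [hlen]; have := hidx (j+1) hj; omega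
        have hstep := psum_succ_get l _ hj'
        have hj'' : (k:ℕ) * L + j < L * B := by rw [hlen] at hj'; exact hj'
        have : l[(k:ℕ) * L + j] = p ⟨(k:ℕ) * L + j, hj''⟩ := by
          simp [hl]
        rw [this] at hstep
        have hptrue : p ⟨(k:ℕ) * L + j, hj''⟩ = true := by
          have := hcon ⟨j, by omega⟩
          simpa using this
        rw [hptrue] at hstep
        have heq : (k:ℕ) * L + (j+1) = (k:ℕ) * L + j + 1 := by omega
        rw [heq, hstep, ih (by omega)]
        simp [val]
        omega
    have h0 := (hins ((k:ℕ) * L) (by rw [hlen]; exact hidx 0 (by omega))).1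
    have hLe := (hins ((k:ℕ) * L + L) (by rw [hlen]; exact hidx L (le_refl _))).2
    rw [grow L (le_refl _)] at hLe
    omega

lemma card_block_bound (L B : ℕ) (hL : 0 < L) :
    (Finset.univ.filter fun p : Fin (L * B) → Bool =>
      ∀ k : Fin B, ∃ j : Fin L, p ⟨k * L + j, by
        calc (k:ℕ) * L + j < (k:ℕ) * L + L := by omega
        _ = ((k:ℕ) + 1) * L := by ring
        _ ≤ B * L := Nat.mul_le_mul_right L k.2
        _ = L * B := Nat.mul_comm B L⟩ = false).card
      ≤ (2 ^ L - 1) ^ B := by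
  classical
  set Φ : (Fin (L * B) → Bool) → (Fin B → Fin L → Bool) :=
    fun p k j => p ⟨k * L + j, by
      calc (k:ℕ) * L + j < (k:ℕ) * L + L := by omega
      _ = ((k:ℕ) + 1) * L := by ring
      _ ≤ B * L := Nat.mul_le_mul_right L k.2
      _ = L * B := Nat.mul_comm B L⟩ with hΦ
  have hinj : Function.Injective Φ := by
    intro p q h
    funext i
    have hi1 : (i : ℕ) % L < L := Nat.mod_lt _ hL
    have hi2 : (i : ℕ) / L < B := by
      rcases Nat.eq_zero_or_pos B with hB | hB
      · subst hB; have h0 := i.isLt; simp at h0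
      · exact Nat.div_lt_of_lt_mul i.2
    have := congrFun (congrFun h ⟨(i:ℕ)/L, hi2⟩) ⟨(i:ℕ)%L, hi1⟩
    simp only [hΦ] at this
    have hix : ∀ (hh : (i:ℕ)/L*L + (i:ℕ)%L < L * B),
        (⟨(i:ℕ)/L*L + (i:ℕ)%L, hh⟩ : Fin (L*B)) = i := by
      intro hh
      ext
      show (i:ℕ)/L*L + (i:ℕ)%L = i
      rw [Nat.mul_comm]
      exact Nat.div_add_mod _ _
    rw [hix] at this
    exact this
  calc _ ≤ (Finset.univ.filter fun f : Fin B → Fin L → Bool =>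
        ∀ k, ∃ j, f k j = false).card := by
        apply Finset.card_le_card_of_injOn Φ
        · intro p hp
          simp only [Finset.coe_filter, Set.mem_setOf_eq, Finset.mem_filter, Finset.mem_univ, true_and] at hp ⊢
          intro k
          obtain ⟨j, hj⟩ := hp k
          exact ⟨j, hj⟩
        · exact hinj.injOn
  _ = Fintype.card {f : Fin B → Fin L → Bool // ∀ k, ∃ j, f k j = false} :=
        (Fintype.card_subtype _).symm
  _ = Fintype.card (∀ _ : Fin B, {q : Fin L → Bool // ∃ j, q j = false}) :=
        Fintype.card_congr (@Equiv.subtypePiEquivPi (Fin B) (fun _ => Fin L → Bool) (fun _ q => ∃ j, q j = false))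
  _ ≤ (2 ^ L - 1) ^ B := by
        rw [Fintype.card_pi]
        have : Fintype.card {q : Fin L → Bool // ∃ j, q j = false} = 2 ^ L - 1 := by
          have e : Fintype.card {q : Fin L → Bool // ¬ (q = fun _ => true)} = 2 ^ L - 1 := by
            rw [Fintype.card_subtype_compl, Fintype.card_subtype_eq]
            simp
          rw [← e]
          apply Fintype.card_congr
          apply Equiv.subtypeEquivRight
          intro q
          simp [funext_iff]
        simp [this]

section Measure
open Finset
variable {Ω : Type*} [MeasurableSpace Ω] (μ : Measure Ω) [IsProbabilityMeasure μ]
  (X : ℕ → Ω → ℤ)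

def patSet (T : ℕ) (p : Fin T → Bool) : Set Ω := {ω | ∀ i : Fin T, X i ω = val (p i)}

lemma meas_patSet
    (hindep : iIndepFun X μ)
    (hup : ∀ i, μ {ω | X i ω = 1} = 1/2) (hdown : ∀ i, μ {ω | X i ω = -1} = 1/2)
    (T : ℕ) (p : Fin T → Bool) :
    μ (patSet X T p) = (2 : ℝ≥0∞)⁻¹ ^ T := by
  classical
  set sets : ℕ → Set ℤ := fun i => if h : i < T then {val (p ⟨i, h⟩)} else Set.univ with hsets
  have hE : patSet X T p = ⋂ i ∈ Finset.range T, X i ⁻¹' sets i := by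
    ext ω
    simp only [patSet, Set.mem_setOf_eq, Set.mem_iInter, Finset.mem_range, hsets]
    constructor
    · intro h i hi
      rw [dif_pos hi]
      exact h ⟨i, hi⟩
    · intro h i
      have := h i i.2
      rw [dif_pos i.2] at this
      exact this
  rw [hE, hindep.measure_inter_preimage_eq_mul (Finset.range T)
    (fun i _ => by
      by_cases h : i < T
      · simp only [hsets, dif_pos h]; exact measurableSet_singleton _
      · simp only [hsets, dif_neg h]; exact MeasurableSet.univ)]
  have : ∀ i ∈ Finset.range T, μ (X i ⁻¹' sets i) = 2⁻¹ := by
    intro i hi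
    rw [Finset.mem_range] at hi
    simp only [hsets, dif_pos hi]
    rcases Bool.eq_false_or_eq_true (p ⟨i, hi⟩) with hb | hb <;> rw [hb]
    · have : X i ⁻¹' {val true} = {ω | X i ω = 1} := rfl
      rw [this, hup i, one_div]
    · have : X i ⁻¹' {val false} = {ω | X i ω = -1} := rfl
      rw [this, hdown i, one_div]
  rw [Finset.prod_congr rfl this, Finset.prod_const, Finset.card_range]

def Bad : Set Ω := {ω | ¬ ∀ i, X i ω = 1 ∨ X i ω = -1}

lemma meas_Bad (hmeas : ∀ i, Measurable (X i))
    (hup : ∀ i, μ {ω | X i ω = 1} = 1/2) (hdown : ∀ i, μ {ω | X i ω = -1} = 1/2) :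
    μ (Bad X) = 0 := by
  have hsub : Bad X ⊆ ⋃ i, ({ω | X i ω = 1} ∪ {ω | X i ω = -1})ᶜ := by
    intro ω hω
    simp only [Bad, Set.mem_setOf_eq] at hω
    push_neg at hω
    obtain ⟨i, h1, h2⟩ := hω
    exact Set.mem_iUnion.2 ⟨i, by simp [h1, h2]⟩
  refine le_antisymm (le_trans (measure_mono hsub) (le_trans (measure_iUnion_le _) ?_)) zero_le
  have : ∀ i : ℕ, μ (({ω | X i ω = 1} ∪ {ω | X i ω = -1})ᶜ) = 0 := by
    intro i
    have hm1 : MeasurableSet {ω | X i ω = 1} := hmeas i (measurableSet_singleton 1)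
    have hm2 : MeasurableSet {ω | X i ω = -1} := hmeas i (measurableSet_singleton (-1))
    have hd : Disjoint {ω | X i ω = 1} {ω | X i ω = -1} := by
      rw [Set.disjoint_left]
      intro ω h1 h2
      simp only [Set.mem_setOf_eq] at h1 h2
      rw [h1] at h2; norm_num at h2
    have hu : μ ({ω | X i ω = 1} ∪ {ω | X i ω = -1}) = 1 := by
      rw [measure_union hd hm2, hup i, hdown i, one_div]
      exact ENNReal.inv_two_add_inv_two
    rw [measure_compl (hm1.union hm2) (measure_ne_top μ _), hu, measure_univ, tsub_self]
  simp only [Set.compl_union] at this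
  simp [this]

lemma pat_of_good (ω : Ω) (hgood : ∀ i, X i ω = 1 ∨ X i ω = -1) (T : ℕ) :
    ∀ i : Fin T, X i ω = val (decide (X i ω = 1)) := by
  intro i
  rcases hgood i with h | h <;> simp [h, val]

lemma covering (T : ℕ) (Q : (Fin T → Bool) → Prop) [DecidablePred Q] (E : Set Ω)
    (hmeas : ∀ i, Measurable (X i))
    (hindep : iIndepFun X μ)
    (hup : ∀ i, μ {ω | X i ω = 1} = 1/2) (hdown : ∀ i, μ {ω | X i ω = -1} = 1/2)
    (hE : ∀ ω ∈ E, (∀ i, X i ω = 1 ∨ X i ω = -1) →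
      Q (fun i : Fin T => decide (X i ω = 1))) :
    μ E ≤ (Finset.univ.filter Q).card * (2 : ℝ≥0∞)⁻¹ ^ T := by
  classical
  have hsub : E ⊆ Bad X ∪ ⋃ p ∈ Finset.univ.filter Q, patSet X T p := by
    intro ω hω
    by_cases hgood : ∀ i, X i ω = 1 ∨ X i ω = -1
    · exact Or.inr (Set.mem_iUnion₂.2 ⟨(fun i => decide (X i ω = 1)),
        Finset.mem_filter.2 ⟨Finset.mem_univ _, hE ω hω hgood⟩, pat_of_good X ω hgood T⟩)
    · exact Or.inl hgood
  calc μ E ≤ μ (Bad X) + μ (⋃ p ∈ Finset.univ.filter Q, patSet X T p) :=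
        le_trans (measure_mono hsub) (measure_union_le _ _)
  _ = μ (⋃ p ∈ Finset.univ.filter Q, patSet X T p) := by
        rw [meas_Bad μ X hmeas hup hdown, zero_add]
  _ ≤ ∑ p ∈ Finset.univ.filter Q, μ (patSet X T p) := measure_biUnion_finset_le _ _
  _ = ∑ p ∈ Finset.univ.filter Q, (2 : ℝ≥0∞)⁻¹ ^ T := by
        exact Finset.sum_congr rfl fun p _ => meas_patSet μ X hindep hup hdown T p
  _ = (Finset.univ.filter Q).card * (2 : ℝ≥0∞)⁻¹ ^ T := by
        rw [Finset.sum_const, nsmul_eq_mul]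

lemma sums_eq_psum (ω : Ω) (T : ℕ) (p : Fin T → Bool)
    (h : ∀ i : Fin T, X i ω = val (p i)) :
    ∀ s ≤ T, ∑ i ∈ Finset.range s, X i ω = psum (List.ofFn p) s := by
  intro s
  induction s with
  | zero => intro _; simp [psum_zero]
  | succ s ih =>
    intro hs
    have hs' : s < T := hs
    rw [Finset.sum_range_succ, ih (le_of_lt hs'),
      psum_succ_get (List.ofFn p) s (by simpa using hs')]
    congr 1
    rw [List.getElem_ofFn]
    exact h ⟨s, hs'⟩

end Measure

section Main
open Finset
variable {Ω : Type*} [MeasurableSpace Ω] (μ : Measure Ω) [IsProbabilityMeasure μ]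
  (X : ℕ → Ω → ℤ)

lemma card_mul_ennreal_le {c : ℕ} {T : ℕ} {r : ℝ} (h : (c : ℝ) * (2⁻¹:ℝ) ^ T ≤ r) :
    (c : ℝ≥0∞) * (2 : ℝ≥0∞)⁻¹ ^ T ≤ ENNReal.ofReal r := by
  have h2 : ((2:ℝ≥0∞))⁻¹ = ENNReal.ofReal ((2⁻¹:ℝ)) := by
    rw [ENNReal.ofReal_inv_of_pos (by norm_num)]
    norm_num
  rw [h2, ← ENNReal.ofReal_pow (by norm_num), ← ENNReal.ofReal_natCast c,
    ← ENNReal.ofReal_mul (by positivity)]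
  exact ENNReal.ofReal_le_ofReal h

lemma chernoff_bound
    (hmeas : ∀ i, Measurable (X i))
    (hindep : iIndepFun X μ)
    (hup : ∀ i, μ {ω | X i ω = 1} = 1/2) (hdown : ∀ i, μ {ω | X i ω = -1} = 1/2)
    (n T : ℕ) {z φ : ℝ} (hz : 0 < z) (hz1 : z ≤ 1) (hφpos : 0 < φ)
    (hrel : z * (φ⁻¹ + φ) = 2) :
    μ {ω | ∃ s ≤ T, ∑ i ∈ Finset.range s, X i ω = (n : ℤ)}
      ≤ ENNReal.ofReal (φ ^ n / z ^ T) := by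
  classical
  have hcov := covering μ X T (fun p => hits (n:ℤ) 0 (List.ofFn p) = true)
    {ω | ∃ s ≤ T, ∑ i ∈ Finset.range s, X i ω = (n : ℤ)} hmeas hindep hup hdown
    (by
      rintro ω ⟨s, hs, hsum⟩ hgood
      set p : Fin T → Bool := fun i => decide (X i ω = 1) with hp
      have := sums_eq_psum X ω T p (pat_of_good X ω hgood T) s hs
      refine (hits_iff (n:ℤ) (List.ofFn p) 0).2 ⟨s, by simpa using hs, ?_⟩
      rw [zero_add, ← this, hsum])
  refine le_trans hcov (card_mul_ennreal_le ?_)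
  set c := (Finset.univ.filter fun p : Fin T → Bool =>
    hits (n:ℤ) 0 (List.ofFn p) = true).card with hc
  have hwsum := wsum z φ (ne_of_gt hφpos) hrel (n:ℤ) T 0 (by positivity)
  have hle : (c : ℝ) * z ^ T ≤ 2 ^ T * φ ^ ((n:ℤ) - 0) := by
    rw [← hwsum]
    calc (c : ℝ) * z ^ T
        = ∑ _p ∈ (Finset.univ.filter fun p : Fin T → Bool =>
            hits (n:ℤ) 0 (List.ofFn p) = true), z ^ T := by
          rw [Finset.sum_const, nsmul_eq_mul]
      _ ≤ ∑ p ∈ (Finset.univ.filter fun p : Fin T → Bool =>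
            hits (n:ℤ) 0 (List.ofFn p) = true), w z φ (n:ℤ) 0 (List.ofFn p) := by
          refine Finset.sum_le_sum fun p hp => ?_
          have := w_ge_of_hits (φ := φ) hz hz1 (n:ℤ) (List.ofFn p) 0
            (Finset.mem_filter.1 hp).2
          simpa using this
      _ ≤ ∑ p : Fin T → Bool, w z φ (n:ℤ) 0 (List.ofFn p) := by
          refine Finset.sum_le_sum_of_subset_of_nonneg (Finset.filter_subset _ _) ?_
          intro p _ _
          exact w_nonneg hz.le hφpos.le _ _ _
  have hφn : φ ^ ((n:ℤ) - 0) = φ ^ n := by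
    rw [sub_zero, zpow_natCast]
  rw [hφn] at hle
  have hzT : (0:ℝ) < z ^ T := by positivity
  calc (c:ℝ) * (2⁻¹:ℝ) ^ T ≤ (2 ^ T * φ ^ n / z ^ T) * (2⁻¹:ℝ) ^ T := by
        refine mul_le_mul_of_nonneg_right ?_ (by positivity)
        rw [le_div_iff₀ hzT]
        exact hle
    _ = φ ^ n / z ^ T := by
        rw [div_eq_mul_inv, div_eq_mul_inv]
        rw [show ((2:ℝ)⁻¹) ^ T = ((2:ℝ) ^ T)⁻¹ by rw [inv_pow]]
        field_simp

lemma never_hit_zero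
    (hmeas : ∀ i, Measurable (X i))
    (hindep : iIndepFun X μ)
    (hup : ∀ i, μ {ω | X i ω = 1} = 1/2) (hdown : ∀ i, μ {ω | X i ω = -1} = 1/2)
    (n : ℕ) (hn : 1 ≤ n) :
    μ {ω | ∀ s : ℕ, ∑ i ∈ Finset.range s, X i ω ≠ (n : ℤ)} = 0 := by
  classical
  set E := {ω | ∀ s : ℕ, ∑ i ∈ Finset.range s, X i ω ≠ (n : ℤ)} with hE
  -- main quantitative bound
  have key : ∀ K B : ℕ, 1 ≤ K →
      μ E ≤ ENNReal.ofReal ((n:ℝ)/K + ((2^(n+K) - 1 : ℝ)/2^(n+K))^B) := by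
    intro K B hK
    set L := n + K with hLdef
    set T := L * B with hTdef
    set lo : ℤ := -(K:ℤ) with hlo
    set hi : ℤ := (n:ℤ) with hhi
    have hlo0 : lo < 0 := by omega
    have hhi0 : 0 < hi := by omega
    have hLle : hi ≤ lo + (L:ℤ) := by push_cast [hLdef]; omega
    have hcov := covering μ X T (fun p => ¬ hits hi 0 (List.ofFn p) = true)
      E hmeas hindep hup hdown
      (by
        rintro ω hω hgood hhit
        set p : Fin T → Bool := fun i => decide (X i ω = 1) with hp
        obtain ⟨s, hs, hval⟩ := (hits_iff hi (List.ofFn p) 0).1 hhit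
        rw [zero_add] at hval
        have hlen : s ≤ T := by simpa using hs
        have := sums_eq_psum X ω T p (pat_of_good X ω hgood T) s hlen
        exact hω s (by rw [this, hval])
      )
    refine le_trans hcov (card_mul_ennreal_le ?_)
    -- split the nonhitting patterns
    set QA := (Finset.univ.filter fun p : Fin T → Bool =>
      sv lo hi 0 (List.ofFn p) = lo) with hQA
    set QB := (Finset.univ.filter fun p : Fin T → Bool =>
      ∀ k : Fin B, ∃ j : Fin L, p ⟨k * L + j, by
        calc (k:ℕ) * L + j < (k:ℕ) * L + L := by omega
        _ = ((k:ℕ) + 1) * L := by ring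
        _ ≤ B * L := Nat.mul_le_mul_right L k.2
        _ = L * B := Nat.mul_comm B L⟩ = false) with hQB
    have hsubset : (Finset.univ.filter fun p : Fin T → Bool =>
        ¬ hits hi 0 (List.ofFn p) = true) ⊆ QA ∪ QB := by
      intro p hp
      have hp' := (Finset.mem_filter.1 hp).2
      by_cases hlohit : hits lo 0 (List.ofFn p) = true
      · refine Finset.mem_union_left _ (Finset.mem_filter.2 ⟨Finset.mem_univ _, ?_⟩)
        exact sv_eq_lo (List.ofFn p) 0 (by omega) (by omega) hlohit hp'
      · refine Finset.mem_union_right _ (Finset.mem_filter.2 ⟨Finset.mem_univ _, ?_⟩)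
        exact block_false hlo0 hhi0 hLle p hp' hlohit
    have hcard : ((Finset.univ.filter fun p : Fin T → Bool =>
        ¬ hits hi 0 (List.ofFn p) = true).card : ℝ)
        ≤ QA.card + QB.card := by
      have := Finset.card_le_card hsubset
      have h2 := Finset.card_union_le QA QB
      push_cast
      exact_mod_cast le_trans (Nat.cast_le.2 this) (Nat.cast_le.2 h2)
    -- bound on QA.card : K * QA.card ≤ n * 2^T  (integers)
    have hQAbound : (K:ℤ) * QA.card ≤ (n:ℤ) * 2^T := by
      have hsv := svsum lo hi T 0
      rw [mul_zero] at hsv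
      have hsplit := Finset.sum_filter_add_sum_filter_not Finset.univ
        (fun p : Fin T → Bool => sv lo hi 0 (List.ofFn p) = lo)
        (fun p => sv lo hi 0 (List.ofFn p))
      rw [hsv] at hsplit
      have hA : ∑ p ∈ QA, sv lo hi 0 (List.ofFn p) = QA.card * lo := by
        rw [Finset.sum_congr rfl (fun p hp => (Finset.mem_filter.1 hp).2),
          Finset.sum_const, nsmul_eq_mul]
      have hBle : ∑ p ∈ (Finset.univ.filter fun p : Fin T → Bool =>
          ¬ sv lo hi 0 (List.ofFn p) = lo), sv lo hi 0 (List.ofFn p)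
          ≤ (Finset.univ.filter fun p : Fin T → Bool =>
          ¬ sv lo hi 0 (List.ofFn p) = lo).card * hi := by
        rw [← nsmul_eq_mul]
        refine Finset.sum_le_card_nsmul _ _ hi fun p _ => ?_
        exact (sv_mem (List.ofFn p) 0 (by omega) (by omega)).2
      have hcard2 : ((Finset.univ.filter fun p : Fin T → Bool =>
          ¬ sv lo hi 0 (List.ofFn p) = lo).card : ℤ) ≤ 2^T := by
        have h1 : (Finset.univ.filter fun p : Fin T → Bool =>
            ¬ sv lo hi 0 (List.ofFn p) = lo).card ≤ Fintype.card (Fin T → Bool) :=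
          le_trans (Finset.card_le_card (Finset.filter_subset _ _)) (le_of_eq (Finset.card_univ))
        have h2 : Fintype.card (Fin T → Bool) = 2 ^ T := by
          simp [Fintype.card_fun]
        exact_mod_cast h2 ▸ h1
      rw [hA] at hsplit
      have hn0 : (0:ℤ) ≤ (n:ℤ) := by positivity
      have hmul := mul_le_mul_of_nonneg_right hcard2 hn0
      have hloK : lo = -(K:ℤ) := rfl
      have hhin : hi = (n:ℤ) := rfl
      rw [hloK] at hsplit
      rw [hhin] at hBle
      nlinarith [hsplit, hBle, hmul]
    -- QB.card bound
    have hQBbound : QB.card ≤ (2 ^ L - 1) ^ B := by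
      rw [hQB]
      exact card_block_bound L B (by omega)
    -- put it together (real arithmetic)
    have h2L1 : (1:ℕ) ≤ 2 ^ L := Nat.one_le_two_pow
    have hcastQB : ((2 ^ L - 1 : ℕ) : ℝ) = (2:ℝ) ^ L - 1 := by
      push_cast [Nat.cast_sub h2L1]
      ring
    have hKpos : (0:ℝ) < (K:ℝ) := by exact_mod_cast hK
    calc ((Finset.univ.filter fun p : Fin T → Bool =>
        ¬ hits hi 0 (List.ofFn p) = true).card : ℝ) * (2⁻¹:ℝ) ^ T
        ≤ ((QA.card:ℝ) + (QB.card:ℝ)) * (2⁻¹:ℝ) ^ T := by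
          refine mul_le_mul_of_nonneg_right hcard (by positivity)
      _ = (QA.card:ℝ) * (2⁻¹:ℝ) ^ T + (QB.card:ℝ) * (2⁻¹:ℝ) ^ T := by ring
      _ ≤ (n:ℝ)/K + ((2^L - 1 : ℝ)/2^L)^B := by
          refine add_le_add ?_ ?_
          · -- QA part
            have hcast : (K:ℝ) * QA.card ≤ (n:ℝ) * 2^T := by exact_mod_cast hQAbound
            have h2T : (0:ℝ) < (2:ℝ)^T := by positivity
            have hstep : (QA.card:ℝ) ≤ (n:ℝ) * 2^T / K := by
              rw [le_div_iff₀ hKpos, mul_comm]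
              exact hcast
            calc (QA.card:ℝ) * (2⁻¹:ℝ) ^ T ≤ ((n:ℝ) * 2^T / K) * (2⁻¹:ℝ) ^ T :=
                  mul_le_mul_of_nonneg_right hstep (by positivity)
              _ = (n:ℝ)/K := by
                  rw [show ((2:ℝ)⁻¹) ^ T = ((2:ℝ) ^ T)⁻¹ by rw [inv_pow]]
                  field_simp
          · -- QB part
            have hQBr : (QB.card : ℝ) ≤ ((2:ℝ)^L - 1)^B := by
              calc (QB.card : ℝ) ≤ (((2 ^ L - 1 : ℕ) : ℝ))^B := by
                    exact_mod_cast hQBbound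
                _ = ((2:ℝ)^L - 1)^B := by rw [hcastQB]
            calc (QB.card:ℝ) * (2⁻¹:ℝ) ^ T ≤ ((2:ℝ)^L - 1)^B * (2⁻¹:ℝ) ^ T := by
                  exact mul_le_mul_of_nonneg_right hQBr (by positivity)
              _ = ((2^L - 1 : ℝ)/2^L)^B := by
                  rw [hTdef, div_pow, pow_mul, div_eq_mul_inv, ← inv_pow, ← inv_pow, ← pow_mul]
  -- conclude: measure is zero
  refine le_antisymm ?_ zero_le
  refine ENNReal.le_of_forall_pos_le_add fun ε hε _ => ?_
  rw [zero_add]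
  have hε2 : (0:ℝ) < (ε:ℝ)/2 := by positivity
  obtain ⟨K, hKn⟩ := exists_nat_gt ((n:ℝ) / ((ε:ℝ)/2))
  have hK1 : 1 ≤ K := by
    rcases Nat.eq_zero_or_pos K with h0 | h
    · exfalso
      subst h0
      have h1 : (0:ℝ) ≤ (n:ℝ)/((ε:ℝ)/2) := div_nonneg (by positivity) hε2.le
      simp at hKn
      linarith
    · exact h
  have hKpos : (0:ℝ) < (K:ℝ) := by exact_mod_cast hK1
  have hnK : (n:ℝ)/K ≤ (ε:ℝ)/2 := by
    rw [div_le_iff₀ hKpos]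
    rw [div_lt_iff₀ hε2] at hKn
    nlinarith
  set r : ℝ := ((2^(n+K) - 1 : ℝ)/2^(n+K)) with hr
  have hrlt : r < 1 := by
    rw [hr, div_lt_one (by positivity)]
    norm_num
  have hrpos : 0 ≤ r := by
    have h1 : (1:ℝ) ≤ 2^(n+K) := one_le_pow₀ (by norm_num)
    rw [hr]
    exact div_nonneg (by linarith) (by positivity)
  obtain ⟨B, hB⟩ := exists_pow_lt_of_lt_one hε2 hrlt
  calc μ E ≤ ENNReal.ofReal ((n:ℝ)/K + r^B) := key K B hK1
    _ ≤ ENNReal.ofReal ((ε:ℝ)/2 + (ε:ℝ)/2) := by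
        refine ENNReal.ofReal_le_ofReal (add_le_add hnK hB.le)
    _ = ENNReal.ofReal (ε:ℝ) := by norm_num
    _ = (ε : ℝ≥0∞) := ENNReal.ofReal_coe_nnreal

end Main

section Final
open Finset
variable {Ω : Type*} [MeasurableSpace Ω] (μ : Measure Ω) [IsProbabilityMeasure μ]
  (X : ℕ → Ω → ℤ)

lemma part1
    (hmeas : ∀ i, Measurable (X i))
    (hindep : iIndepFun X μ)
    (hup : ∀ i, μ {ω | X i ω = 1} = 1/2) (hdown : ∀ i, μ {ω | X i ω = -1} = 1/2)
    (τ : ℕ → Ω → ℕ)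
    (hτ : ∀ n ω, τ n ω = sInf {t : ℕ | ∑ i ∈ Finset.range t, X i ω = (n : ℤ)})
    (n : ℕ) (hn : 1 ≤ n) (t : ℝ) (ht : 0 < t) (z : ℝ) (hz : 0 < z) (hz1 : z < 1) :
    μ {ω | (τ n ω : ℝ) ≤ t}
      ≤ ENNReal.ofReal (((1 - Real.sqrt (1 - z ^ 2)) / z) ^ n * z ^ (-t)) := by
  set s := Real.sqrt (1 - z^2) with hsdef
  have hs0 : 0 ≤ s := Real.sqrt_nonneg _
  have hz2 : z^2 < 1 := by nlinarith
  have hs2 : s^2 = 1 - z^2 := Real.sq_sqrt (by linarith)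
  have hslt : s < 1 := by
    have h := Real.sqrt_lt_sqrt (show (0:ℝ) ≤ 1 - z^2 by linarith)
      (show 1 - z^2 < 1 by nlinarith)
    rw [Real.sqrt_one] at h
    exact h
  set φ := (1 - s)/z with hφdef
  have hφpos : 0 < φ := div_pos (by linarith) hz
  have hrel : z * (φ⁻¹ + φ) = 2 := by
    rw [hφdef, inv_div]
    have h1s : (1:ℝ) - s ≠ 0 := by linarith
    field_simp
    linear_combination hs2
  set T := ⌊t⌋₊ with hT
  have hsub : {ω | (τ n ω : ℝ) ≤ t} ⊆
      {ω | ∃ s' ≤ T, ∑ i ∈ Finset.range s', X i ω = (n : ℤ)} ∪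
      {ω | ∀ s' : ℕ, ∑ i ∈ Finset.range s', X i ω ≠ (n : ℤ)} := by
    intro ω hω
    by_cases hne : {t' : ℕ | ∑ i ∈ Finset.range t', X i ω = (n : ℤ)}.Nonempty
    · left
      have hmem := Nat.sInf_mem hne
      rw [← hτ n ω] at hmem
      exact ⟨τ n ω, Nat.le_floor hω, hmem⟩
    · right
      intro s' hs'
      exact hne ⟨s', hs'⟩
  calc μ {ω | (τ n ω : ℝ) ≤ t}
      ≤ μ {ω | ∃ s' ≤ T, ∑ i ∈ Finset.range s', X i ω = (n : ℤ)} +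
        μ {ω | ∀ s' : ℕ, ∑ i ∈ Finset.range s', X i ω ≠ (n : ℤ)} :=
        le_trans (measure_mono hsub) (measure_union_le _ _)
    _ = μ {ω | ∃ s' ≤ T, ∑ i ∈ Finset.range s', X i ω = (n : ℤ)} := by
        rw [never_hit_zero μ X hmeas hindep hup hdown n hn, add_zero]
    _ ≤ ENNReal.ofReal (φ ^ n / z ^ T) :=
        chernoff_bound μ X hmeas hindep hup hdown n T hz hz1.le hφpos hrel
    _ ≤ ENNReal.ofReal (φ ^ n * z ^ (-t)) := by
        refine ENNReal.ofReal_le_ofReal ?_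
        rw [div_eq_mul_inv]
        refine mul_le_mul_of_nonneg_left ?_ (by positivity)
        have e1 : (z ^ T)⁻¹ = z ^ (-(T:ℝ)) := by
          rw [Real.rpow_neg hz.le, Real.rpow_natCast]
        rw [e1]
        exact Real.rpow_le_rpow_of_exponent_ge hz hz1.le
          (neg_le_neg (Nat.floor_le ht.le))

end Final

end Stmt7

/-- Chernoff bound for the first passage time `τ_n` of simple symmetric
random walk on ℤ: `P(τ_n ≤ t) ≤ inf_{z∈(0,1)} ((1−√(1−z²))/z)^n · z^{−t}`; in
particular, for `τ* ≥ 1`, `γ > 0`, `n ≥ 10γ√(τ*)·log N` and `t = 9γ·τ*·log N`,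
`P(τ_n ≤ t) ≤ N^{−5γ/4}` for `N` large enough. -/
theorem stmt7 {Ω : Type*} [MeasurableSpace Ω] (μ : Measure Ω) [IsProbabilityMeasure μ]
    (X : ℕ → Ω → ℤ) (hmeas : ∀ i, Measurable (X i))
    (hindep : iIndepFun X μ)
    (hup : ∀ i, μ {ω | X i ω = 1} = 1/2) (hdown : ∀ i, μ {ω | X i ω = -1} = 1/2)
    (τ : ℕ → Ω → ℕ)
    (hτ : ∀ n ω, τ n ω = sInf {t : ℕ | ∑ i ∈ Finset.range t, X i ω = (n : ℤ)}) :
    (∀ n : ℕ, 1 ≤ n → ∀ t : ℝ, 0 < t → ∀ z : ℝ, 0 < z → z < 1 →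
        μ {ω | (τ n ω : ℝ) ≤ t}
          ≤ ENNReal.ofReal (((1 - Real.sqrt (1 - z ^ 2)) / z) ^ n * z ^ (-t))) ∧
      ∀ γ τstar : ℝ, 0 < γ → 1 ≤ τstar →
        ∃ N₀ : ℕ, ∀ N : ℕ, N₀ ≤ N → ∀ n : ℕ, 1 ≤ n →
          10 * γ * Real.sqrt τstar * Real.log N ≤ (n : ℝ) →
          μ {ω | (τ n ω : ℝ) ≤ 9 * γ * τstar * Real.log N}
            ≤ ENNReal.ofReal ((N : ℝ) ^ (-(5 * γ / 4))) := by
  constructor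
  · exact Stmt7.part1 μ X hmeas hindep hup hdown τ hτ
  · intro γ τstar hγ hτstar
    refine ⟨2, fun N hN n hn hnlb => ?_⟩
    set L := Real.log N with hLdef
    have hN1 : (1:ℝ) < (N:ℝ) := by
      have : (2:ℝ) ≤ (N:ℝ) := by exact_mod_cast hN
      linarith
    have hLpos : 0 < L := Real.log_pos hN1
    have hτs0 : (0:ℝ) < τstar := by linarith
    have hsq : 0 < Real.sqrt τstar := Real.sqrt_pos.2 hτs0
    set θ := 1/(2*Real.sqrt τstar) with hθdef
    have hθpos : 0 < θ := by positivity
    set t := 9 * γ * τstar * L with htdef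
    have ht : 0 < t := by positivity
    set z := (Real.cosh θ)⁻¹ with hzdef
    have hcoshpos : 0 < Real.cosh θ := Real.cosh_pos θ
    have hcosh1 : 1 < Real.cosh θ := Real.one_lt_cosh.2 (ne_of_gt hθpos)
    have hz : 0 < z := by positivity
    have hz1 : z < 1 := by
      rw [hzdef]
      rw [inv_lt_one_iff₀]
      right
      exact hcosh1
    refine le_trans (Stmt7.part1 μ X hmeas hindep hup hdown τ hτ n hn t ht z hz hz1)
      (ENNReal.ofReal_le_ofReal ?_)
    -- identify φ with exp (-θ)
    have hsinhpos : 0 < Real.sinh θ := Real.sinh_pos_iff.2 hθpos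
    have h1z : 1 - z^2 = (Real.sinh θ / Real.cosh θ)^2 := by
      rw [hzdef, div_pow]
      rw [Real.sinh_sq]
      field_simp
    have hsqrt : Real.sqrt (1 - z^2) = Real.sinh θ / Real.cosh θ := by
      rw [h1z, Real.sqrt_sq (by positivity)]
    have hφexp : (1 - Real.sqrt (1 - z^2)) / z = Real.exp (-θ) := by
      rw [hsqrt, hzdef, div_inv_eq_mul, sub_mul, div_mul_cancel₀ _ (ne_of_gt hcoshpos),
        one_mul, Real.cosh_sub_sinh]
    have hzt : z ^ (-t) = Real.cosh θ ^ t := by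
      rw [hzdef, Real.inv_rpow hcoshpos.le, Real.rpow_neg hcoshpos.le, inv_inv]
    rw [hφexp, hzt]
    have hφn : Real.exp (-θ) ^ n = Real.exp (-(θ * n)) := by
      rw [← Real.exp_nat_mul]
      congr 1
      ring
    have hcosht : Real.cosh θ ^ t ≤ Real.exp (θ^2/2 * t) := by
      calc Real.cosh θ ^ t ≤ Real.exp (θ^2/2) ^ t :=
            Real.rpow_le_rpow hcoshpos.le (Real.cosh_le_exp_half_sq θ) ht.le
        _ = Real.exp (θ^2/2 * t) := by
            rw [Real.rpow_def_of_pos (Real.exp_pos _), Real.log_exp]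
    have hNrpow : (N:ℝ) ^ (-(5 * γ / 4)) = Real.exp ((-(5 * γ / 4)) * L) := by
      rw [Real.rpow_def_of_pos (by linarith), hLdef, mul_comm]
    calc Real.exp (-θ) ^ n * Real.cosh θ ^ t
        ≤ Real.exp (-(θ * n)) * Real.exp (θ^2/2 * t) := by
          rw [hφn]
          exact mul_le_mul_of_nonneg_left hcosht (Real.exp_nonneg _)
      _ = Real.exp (-(θ * n) + θ^2/2 * t) := by rw [← Real.exp_add]
      _ ≤ Real.exp ((-(5 * γ / 4)) * L) := by
          refine Real.exp_le_exp.2 ?_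
          have hθn : 5 * γ * L ≤ θ * n := by
            calc 5 * γ * L = θ * (10 * γ * Real.sqrt τstar * L) := by
                  rw [hθdef]
                  field_simp
                  ring
              _ ≤ θ * n := mul_le_mul_of_nonneg_left hnlb hθpos.le
          have hθ2 : θ^2 = 1/(4*τstar) := by
            rw [hθdef, div_pow, mul_pow, Real.sq_sqrt hτs0.le]
            norm_num
          have hθt : θ^2/2 * t = 9/8 * γ * L := by
            rw [hθ2, htdef]
            field_simp
            ring
          rw [hθt]
          nlinarith [mul_pos hγ hLpos]
      _ = (N:ℝ) ^ (-(5 * γ / 4)) := hNrpow.symm
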